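/- Let X be a topological space, P : X → X a bijection, x ∈ X, and p̂ ∈ X such that P^{−n}(x) → p̂ as n → ∞. Let φ : X → ℝ be a continuous function such that the forward Birkhoff averages (1/N) ∑_{j=0}^{N−1} φ(P^j x) do not converge as N → ∞. Then the symmetric two-sided Birkhoff averages (1/(2N)) ∑_{j=−N}^{N−1} φ(P^j x) also do not converge as N → ∞. (Example 3.4: the suspension of a diffeomorphism P possessing points without time averages, and whose backward orbits converge to a source, yields a codimension-two regular foliation of a compact manifold without length averages.) -/
import Mathlib


open Filter Topology

lemma sum_Icc_split (f : ℤ → ℝ) (N : ℕ) :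
    (∑ j ∈ Finset.Icc (-(N : ℤ)) ((N : ℤ) - 1), f j)
      = (∑ i ∈ Finset.range N, f (-(i : ℤ) - 1)) + ∑ i ∈ Finset.range N, f i := by
  have hsplit : Finset.Icc (-(N : ℤ)) ((N : ℤ) - 1)
      = Finset.Icc (-(N : ℤ)) (-1) ∪ Finset.Icc 0 ((N : ℤ) - 1) := by
    ext j
    simp only [Finset.mem_union, Finset.mem_Icc]
    omega
  have hdisj : Disjoint (Finset.Icc (-(N : ℤ)) (-1)) (Finset.Icc 0 ((N : ℤ) - 1)) := by
    rw [Finset.disjoint_left]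
    intro j hj hj'
    simp only [Finset.mem_Icc] at hj hj'
    omega
  rw [hsplit, Finset.sum_union hdisj]
  congr 1
  · refine Finset.sum_nbij' (fun j => (-j - 1).toNat) (fun i => -(i : ℤ) - 1) ?_ ?_ ?_ ?_ ?_
    · intro j hj
      simp only [Finset.mem_Icc] at hj
      simp only [Finset.mem_range]
      (try dsimp only); omega
    · intro i hi
      simp only [Finset.mem_range] at hi
      simp only [Finset.mem_Icc]
      (try dsimp only); omega
    · intro j hj
      simp only [Finset.mem_Icc] at hj
      (try dsimp only); omega
    · intro i _
      (try dsimp only); omega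
    · intro j hj
      simp only [Finset.mem_Icc] at hj
      congr 1
      (try dsimp only); omega
  · refine Finset.sum_nbij' (fun j => j.toNat) (fun i => (i : ℤ)) ?_ ?_ ?_ ?_ ?_
    · intro j hj
      simp only [Finset.mem_Icc] at hj
      simp only [Finset.mem_range]
      (try dsimp only); omega
    · intro i hi
      simp only [Finset.mem_range] at hi
      simp only [Finset.mem_Icc]
      (try dsimp only); omega
    · intro j hj
      simp only [Finset.mem_Icc] at hj
      (try dsimp only); omega
    · intro i _
      (try dsimp only); omega
    · intro j hj
      simp only [Finset.mem_Icc] at hj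
      congr 1
      (try dsimp only); omega

/-- Example 3.4: if the backward orbit of `x` under a bijection `P` converges to `phat` and
the forward Birkhoff averages of a continuous `φ` at `x` do not converge, then the
symmetric two-sided Birkhoff averages do not converge either. -/
theorem two_sided_birkhoff_average_does_not_exist
    {X : Type*} [TopologicalSpace X] (P : Equiv.Perm X) (x phat : X)
    (hback : Tendsto (fun n : ℕ => (P ^ (-(n : ℤ))) x) atTop (𝓝 phat))
    (φ : X → ℝ) (hφ : Continuous φ)
    (hfwd : ¬ ∃ A : ℝ, Tendsto (fun N : ℕ => (∑ j ∈ Finset.range N, φ ((P ^ j) x)) / N)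
      atTop (𝓝 A)) :
    ¬ ∃ c : ℝ, Tendsto
      (fun N : ℕ => (∑ j ∈ Finset.Icc (-(N : ℤ)) ((N : ℤ) - 1), φ ((P ^ j) x)) / (2 * N))
      atTop (𝓝 c) := by
  rintro ⟨c, hc⟩
  apply hfwd
  refine ⟨2 * c - φ phat, ?_⟩
  -- the backward orbit values converge to φ phat
  have hu : Tendsto (fun i : ℕ => φ ((P ^ (-(i : ℤ) - 1)) x)) atTop (𝓝 (φ phat)) := by
    have h1 : Tendsto (fun n : ℕ => φ ((P ^ (-(n : ℤ))) x)) atTop (𝓝 (φ phat)) :=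
      (hφ.continuousAt.tendsto).comp hback
    have h2 := h1.comp (tendsto_add_atTop_nat 1)
    refine h2.congr fun i => ?_
    simp only [Function.comp_apply]
    congr 2
    push_cast
    ring
  -- Cesàro: backward averages converge to φ phat
  have hB : Tendsto (fun N : ℕ =>
      (∑ i ∈ Finset.range N, φ ((P ^ (-(i : ℤ) - 1)) x)) / N) atTop (𝓝 (φ phat)) := by
    simpa [div_eq_inv_mul] using hu.cesaro
  -- combine
  have hcomb : Tendsto (fun N : ℕ =>
      2 * ((∑ j ∈ Finset.Icc (-(N : ℤ)) ((N : ℤ) - 1), φ ((P ^ j) x)) / (2 * N))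
        - (∑ i ∈ Finset.range N, φ ((P ^ (-(i : ℤ) - 1)) x)) / N)
      atTop (𝓝 (2 * c - φ phat)) := (hc.const_mul 2).sub hB
  refine hcomb.congr fun N => ?_
  rcases Nat.eq_zero_or_pos N with rfl | hN
  · simp
  · have hN0 : (N : ℝ) ≠ 0 := Nat.cast_ne_zero.mpr hN.ne'
    rw [sum_Icc_split (fun j => φ ((P ^ j) x)) N]
    have : ∀ i ∈ Finset.range N, φ ((P ^ (i : ℤ)) x) = φ ((P ^ i) x) := by
      intro i _
      rw [zpow_natCast]
    rw [Finset.sum_congr rfl this]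
    field_simp
    ring
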